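/- Let Ω ⊂ ℝⁿ be a bounded measurable set and let v : ℝⁿ → ℝⁿ be a continuously differentiable vector field with bounded derivative. For t ∈ ℝ small, let Ω_t := (id + t·v)(Ω) be the image of Ω under the map x ↦ x + t·v(x). Then the function t ↦ |Ω_t| (Lebesgue measure) is differentiable at t = 0 with derivative d/dt |Ω_t| |_{t=0} = ∫_Ω div v(x) dx; in other words |Ω_t| = |Ω| + t·∫_Ω div v dx + o(t) as t → 0. -/

import Mathlib

open MeasureTheory Polynomial

/-- Positivity of the determinant of `1 + B` for `‖B‖ < 1`. -/
lemma aux_det_one_add_pos {E : Type*} [NormedAddCommGroup E] [NormedSpace ℝ E]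
    [FiniteDimensional ℝ E] (B : E →L[ℝ] E) (hB : ‖B‖ < 1) :
    0 < ((1 + B : E →L[ℝ] E)).det := by
  have hcont : Continuous fun u : ℝ => ((1 + u • B : E →L[ℝ] E)).det :=
    ContinuousLinearMap.continuous_det.comp (continuous_const.add (continuous_id.smul continuous_const))
  have hdet1 : ((1 + (0:ℝ) • B : E →L[ℝ] E)).det = 1 := by
    simp [ContinuousLinearMap.det, ContinuousLinearMap.one_def, ContinuousLinearMap.coe_id]
  have hne : ∀ u ∈ Set.Icc (0:ℝ) 1, ((1 + u • B : E →L[ℝ] E)).det ≠ 0 := by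
    intro u hu
    have hnorm : ‖-(u • B)‖ < 1 := by
      rw [norm_neg]
      have h1 : ‖u • B‖ = ‖u‖ * ‖B‖ := norm_smul u B
      rw [h1]
      calc ‖u‖ * ‖B‖ ≤ 1 * ‖B‖ := by
            apply mul_le_mul_of_nonneg_right _ (norm_nonneg _)
            rw [Real.norm_eq_abs, abs_le]; exact ⟨by linarith [hu.1], hu.2⟩
        _ < 1 := by simpa using hB
    have hunit : IsUnit ((1 + u • B : E →L[ℝ] E)) := by
      simpa [sub_neg_eq_add] using isUnit_one_sub_of_norm_lt_one hnorm
    have h2 : IsUnit (((1 + u • B : E →L[ℝ] E)) : E →ₗ[ℝ] E) :=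
      hunit.map (ContinuousLinearMap.toLinearMapRingHom (R₁ := ℝ) (M₁ := E))
    exact (h2.map LinearMap.det).ne_zero
  by_contra hle
  push_neg at hle
  have h1ne := hne 1 (by norm_num)
  have hlt : ((1 + (1:ℝ) • B : E →L[ℝ] E)).det < 0 := by
    rw [one_smul]
    rcases lt_or_eq_of_le hle with h | h
    · exact h
    · exact absurd h (by simpa using h1ne)
  have h0mem : (0:ℝ) ∈ Set.Icc (((1 + (1:ℝ) • B : E →L[ℝ] E)).det)
      (((1 + (0:ℝ) • B : E →L[ℝ] E)).det) := ⟨hlt.le, by rw [hdet1]; norm_num⟩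
  rcases intermediate_value_Icc' (by norm_num : (0:ℝ) ≤ 1) hcont.continuousOn h0mem with ⟨u, hu, hgu⟩
  exact hne u hu hgu

open MeasureTheory Polynomial Matrix

variable {n : ℕ}

/-- Evaluating the polynomial `det (1 + X • M.map C)` at `r` gives `det (1 + r • M)`. -/
lemma aux_eval_det (M : Matrix (Fin n) (Fin n) ℝ) (r : ℝ) :
    (Matrix.det (1 + (X : ℝ[X]) • M.map C)).eval r = Matrix.det (1 + r • M) := by
  rw [← coe_evalRingHom, RingHom.map_det]
  congr 1
  ext i j
  simp only [RingHom.mapMatrix_apply, Matrix.map_apply, Matrix.add_apply, Matrix.smul_apply,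
    Matrix.one_apply, smul_eq_mul, coe_evalRingHom, apply_ite (eval r),
    eval_add, eval_mul, eval_X, eval_C, eval_one, eval_zero]

/-- Degree bound on `det (1 + X • M.map C)`. -/
lemma aux_degree_det (M : Matrix (Fin n) (Fin n) ℝ) :
    (Matrix.det (1 + (X : ℝ[X]) • M.map C)).degree < ((n + 1 : ℕ) : WithBot ℕ) := by
  have h1 : (1 : Matrix (Fin n) (Fin n) ℝ[X]) = (1 : Matrix (Fin n) (Fin n) ℝ).map C := by
    ext i j
    simp [Matrix.map_apply, Matrix.one_apply, apply_ite]
  have h2 := Polynomial.natDegree_det_X_add_C_le M (1 : Matrix (Fin n) (Fin n) ℝ)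
  have h3 : (1 : Matrix (Fin n) (Fin n) ℝ[X]) + (X : ℝ[X]) • M.map C
      = (X : ℝ[X]) • M.map C + (1 : Matrix (Fin n) (Fin n) ℝ).map C := by
    rw [← h1, add_comm]
  rw [h3]
  calc (Matrix.det ((X : ℝ[X]) • M.map C + (1 : Matrix (Fin n) (Fin n) ℝ).map C)).degree
      ≤ ((Matrix.det ((X : ℝ[X]) • M.map C + (1 : Matrix (Fin n) (Fin n) ℝ).map C)).natDegree : WithBot ℕ) :=
        Polynomial.degree_le_natDegree
    _ ≤ (Fintype.card (Fin n) : WithBot ℕ) := by exact_mod_cast h2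
    _ < ((n + 1 : ℕ) : WithBot ℕ) := by
        rw [Fintype.card_fin]
        exact_mod_cast Nat.lt_succ_self n

/-- Interpolation nodes `0, 1, ..., n` as a finset of reals. -/
noncomputable def auxNodes (n : ℕ) : Finset ℝ := (Finset.range (n + 1)).image (Nat.cast)

lemma aux_card_nodes : (auxNodes n).card = n + 1 := by
  rw [auxNodes, Finset.card_image_of_injective _ Nat.cast_injective, Finset.card_range]

/-- The determinant polynomial written in the Lagrange basis at the nodes. -/
lemma aux_interp (M : Matrix (Fin n) (Fin n) ℝ) :
    Matrix.det (1 + (X : ℝ[X]) • M.map C)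
      = ∑ r ∈ auxNodes n, Polynomial.C (Matrix.det (1 + r • M)) * Lagrange.basis (auxNodes n) id r := by
  have h := Lagrange.eq_interpolate (s := auxNodes n) (v := id) (Set.injOn_id _)
    (by rw [aux_card_nodes]; exact aux_degree_det M)
  conv_lhs => rw [h]
  rw [Lagrange.interpolate_apply]
  exact Finset.sum_congr rfl fun r _ => by rw [id_eq, aux_eval_det]

/-- The trace as a combination of determinants at the nodes. -/
lemma aux_trace_eq (M : Matrix (Fin n) (Fin n) ℝ) :
    Matrix.trace M = ∑ r ∈ auxNodes n,
      Matrix.det (1 + r • M) * ((Lagrange.basis (auxNodes n) id r).derivative.eval 0) := by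
  rw [← Matrix.derivative_det_one_add_X_smul M, aux_interp M]
  rw [map_sum derivative]
  simp [Polynomial.derivative_C_mul, Polynomial.eval_finset_sum]

/-- Expansion of `det (1 + t • M)` in the Lagrange basis. -/
lemma aux_det_expand (M : Matrix (Fin n) (Fin n) ℝ) (t : ℝ) :
    Matrix.det (1 + t • M)
      = ∑ r ∈ auxNodes n, Matrix.det (1 + r • M) * (Lagrange.basis (auxNodes n) id r).eval t := by
  rw [← aux_eval_det M t, aux_interp M]
  simp [Polynomial.eval_finset_sum]


/-- The divergence of a vector field on Euclidean space, as the trace of its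
(Fréchet) derivative. -/
noncomputable def divergence {n : ℕ}
    (v : EuclideanSpace ℝ (Fin n) → EuclideanSpace ℝ (Fin n))
    (x : EuclideanSpace ℝ (Fin n)) : ℝ :=
  LinearMap.trace ℝ (EuclideanSpace ℝ (Fin n)) (fderiv ℝ v x).toLinearMap

set_option maxHeartbeats 2000000 in
/-- First-order volume expansion under a domain perturbation: for a bounded
measurable set `Ω` and a `C¹` vector field `v` with bounded derivative, the volume
of `Ω_t = (id + t v)(Ω)` is differentiable at `t = 0` with derivative
`∫_Ω div v dx`. -/
theorem volume_first_variation (n : ℕ) (Ω : Set (EuclideanSpace ℝ (Fin n)))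
    (hΩm : MeasurableSet Ω) (hΩb : Bornology.IsBounded Ω)
    (v : EuclideanSpace ℝ (Fin n) → EuclideanSpace ℝ (Fin n))
    (hv : ContDiff ℝ 1 v) (C : ℝ) (hC : ∀ x, ‖fderiv ℝ v x‖ ≤ C) :
    HasDerivAt
      (fun t : ℝ => (volume ((fun x => x + t • v x) '' Ω)).toReal)
      (∫ x in Ω, divergence v x) 0 := by
  classical
  have hC0 : (0:ℝ) ≤ C := le_trans (norm_nonneg _) (hC 0)
  have hvdiff : Differentiable ℝ v := hv.differentiable one_ne_zero
  set b : Module.Basis (Fin n) ℝ (EuclideanSpace ℝ (Fin n)) := (EuclideanSpace.basisFun (Fin n) ℝ).toBasis with hb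
  set A : EuclideanSpace ℝ (Fin n) → Matrix (Fin n) (Fin n) ℝ :=
    fun x => LinearMap.toMatrix b b ((fderiv ℝ v x) : _ →ₗ[ℝ] _) with hA
  have hfc : Continuous (fderiv ℝ v) := hv.continuous_fderiv one_ne_zero
  have hAcont : Continuous A := by
    have h1 : Continuous fun f : EuclideanSpace ℝ (Fin n) →L[ℝ] EuclideanSpace ℝ (Fin n) =>
        LinearMap.toMatrix b b (f : _ →ₗ[ℝ] _) :=
      ((LinearMap.toMatrix b b).toLinearMap.comp
        (ContinuousLinearMap.coeLM ℝ)).continuous_of_finiteDimensional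
    exact h1.comp hfc
  -- determinant relation
  have hdet : ∀ (t : ℝ) (x), ((1 : _ →L[ℝ] _) + t • fderiv ℝ v x).det
      = Matrix.det (1 + t • A x) := by
    intro t x
    rw [ContinuousLinearMap.det, ← LinearMap.det_toMatrix b]
    congr 1
    have hco : (((1 : EuclideanSpace ℝ (Fin n) →L[ℝ] EuclideanSpace ℝ (Fin n))
            + t • fderiv ℝ v x).toLinearMap)
        = (LinearMap.id : EuclideanSpace ℝ (Fin n) →ₗ[ℝ] EuclideanSpace ℝ (Fin n))
            + t • (fderiv ℝ v x).toLinearMap := by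
      ext y; simp
    rw [hco, map_add, LinearEquiv.map_smul, LinearMap.toMatrix_id]
  have hdiv : ∀ x, divergence v x = Matrix.trace (A x) := fun x => by
    rw [divergence, LinearMap.trace_eq_matrix_trace ℝ b]
  have hIcont : ∀ h : EuclideanSpace ℝ (Fin n) → ℝ, Continuous h → IntegrableOn h Ω volume := by
    intro h hh
    exact (hh.continuousOn.integrableOn_compact hΩb.isCompact_closure).mono_set subset_closure
  have hdetcont : ∀ r : ℝ, Continuous fun x => Matrix.det (1 + r • A x) :=
    fun r => Continuous.matrix_det (continuous_const.add (hAcont.const_smul r))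
  set q : Polynomial ℝ := ∑ r ∈ auxNodes n,
    Polynomial.C (∫ x in Ω, Matrix.det (1 + r • A x)) * Lagrange.basis (auxNodes n) id r with hq
  -- the derivative of q at 0 is the divergence integral
  have hqder : Polynomial.eval 0 (Polynomial.derivative q) = ∫ x in Ω, divergence v x := by
    have h1 : ∀ x, divergence v x = ∑ r ∈ auxNodes n,
        ((Lagrange.basis (auxNodes n) id r).derivative.eval 0) * Matrix.det (1 + r • A x) := by
      intro x; rw [hdiv x, aux_trace_eq]
      exact Finset.sum_congr rfl fun r _ => mul_comm _ _
    have h2 : (∫ x in Ω, divergence v x)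
        = ∑ r ∈ auxNodes n, (∫ x in Ω, Matrix.det (1 + r • A x)) *
            ((Lagrange.basis (auxNodes n) id r).derivative.eval 0) := by
      have hfun : (fun x => divergence v x) = fun x => ∑ r ∈ auxNodes n,
          ((Lagrange.basis (auxNodes n) id r).derivative.eval 0) * Matrix.det (1 + r • A x) :=
        funext h1
      rw [hfun, integral_finset_sum _ (fun r _ =>
        (hIcont (fun x => (Lagrange.basis (auxNodes n) id r).derivative.eval 0 * Matrix.det (1 + r • A x)) (continuous_const.mul (hdetcont r))))]
      exact Finset.sum_congr rfl fun r _ => by rw [integral_const_mul]; ring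
    rw [h2, hq, map_sum Polynomial.derivative]
    simp [Polynomial.derivative_C_mul, Polynomial.eval_finset_sum]
  -- equality of the two functions near 0
  have hball : Metric.ball (0:ℝ) ((C+1)⁻¹) ∈ nhds (0:ℝ) := Metric.ball_mem_nhds _ (by positivity)
  have hmain : ∀ t ∈ Metric.ball (0:ℝ) ((C+1)⁻¹),
      (volume ((fun x => x + t • v x) '' Ω)).toReal = Polynomial.eval t q := by
    intro t ht
    have htC : |t| * C < 1 := by
      rw [Metric.mem_ball, Real.dist_eq, sub_zero] at ht
      have h1 : |t| * (C + 1) < (C + 1)⁻¹ * (C + 1) :=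
        mul_lt_mul_of_pos_right ht (by positivity)
      rw [inv_mul_cancel₀ (by positivity : (C:ℝ) + 1 ≠ 0)] at h1
      have h2 : |t| * C ≤ |t| * (C + 1) :=
        mul_le_mul_of_nonneg_left (by linarith) (abs_nonneg t)
      linarith
    have hfd : ∀ x ∈ Ω, HasFDerivWithinAt (fun x => x + t • v x)
        ((1 : _ →L[ℝ] _) + t • fderiv ℝ v x) Ω x := by
      intro x _
      exact ((hasFDerivAt_id x).add ((hvdiff x).hasFDerivAt.const_smul t)).hasFDerivWithinAt
    have hlip : LipschitzWith (Real.toNNReal C) v :=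
      lipschitzWith_of_nnnorm_fderiv_le hvdiff (fun x => by
        rw [← NNReal.coe_le_coe, coe_nnnorm, Real.coe_toNNReal C hC0]; exact hC x)
    have hinj : Set.InjOn (fun x => x + t • v x) Ω := by
      intro x _ y _ hxy
      by_contra hne
      have h1 : x - y = t • v y - t • v x := by
        rw [sub_eq_sub_iff_add_eq_add]
        simpa [add_comm] using hxy
      have hvd : ‖v y - v x‖ ≤ C * ‖y - x‖ := by
        have := hlip.dist_le_mul y x
        rwa [dist_eq_norm, dist_eq_norm, Real.coe_toNNReal C hC0] at this
      have h2 : ‖x - y‖ ≤ |t| * (C * ‖y - x‖) := by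
        rw [h1, ← smul_sub, norm_smul, Real.norm_eq_abs]
        exact mul_le_mul_of_nonneg_left hvd (abs_nonneg t)
      have h3 : ‖y - x‖ = ‖x - y‖ := norm_sub_rev y x
      have h4 : 0 < ‖x - y‖ := by
        rw [norm_pos_iff]; exact sub_ne_zero.mpr hne
      rw [h3] at h2
      nlinarith
    have hmeasEq := lintegral_abs_det_fderiv_eq_addHaar_image volume hΩm hfd hinj
    have hpos : ∀ x, 0 < Matrix.det (1 + t • A x) := by
      intro x
      rw [← hdet t x]
      apply aux_det_one_add_pos
      have hns : ‖t • fderiv ℝ v x‖ = |t| * ‖fderiv ℝ v x‖ := by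
        rw [norm_smul, Real.norm_eq_abs]
      rw [hns]
      calc |t| * ‖fderiv ℝ v x‖ ≤ |t| * C :=
            mul_le_mul_of_nonneg_left (hC x) (abs_nonneg t)
        _ < 1 := htC
    have hint : IntegrableOn (fun x => Matrix.det (1 + t • A x)) Ω volume :=
      hIcont _ (hdetcont t)
    have hlin : (∫⁻ x in Ω, ENNReal.ofReal |((1 : _ →L[ℝ] _) + t • fderiv ℝ v x).det| ∂volume)
        = ENNReal.ofReal (∫ x in Ω, Matrix.det (1 + t • A x)) := by
      rw [ofReal_integral_eq_lintegral_ofReal hint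
        (Filter.Eventually.of_forall fun x => (hpos x).le)]
      exact setLIntegral_congr_fun hΩm (fun x hx => by
        rw [hdet t x, abs_of_pos (hpos x)])
    have hexp : (fun x => Matrix.det (1 + t • A x))
        = fun x => ∑ r ∈ auxNodes n,
            Matrix.det (1 + r • A x) * (Lagrange.basis (auxNodes n) id r).eval t :=
      funext fun x => aux_det_expand (A x) t
    calc (volume ((fun x => x + t • v x) '' Ω)).toReal
        = (ENNReal.ofReal (∫ x in Ω, Matrix.det (1 + t • A x))).toReal := by
          rw [← hmeasEq, hlin]
      _ = ∫ x in Ω, Matrix.det (1 + t • A x) :=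
          ENNReal.toReal_ofReal (setIntegral_nonneg hΩm fun x _ => (hpos x).le)
      _ = ∑ r ∈ auxNodes n, (∫ x in Ω, Matrix.det (1 + r • A x)) *
            (Lagrange.basis (auxNodes n) id r).eval t := by
          rw [hexp, integral_finset_sum _ (fun r _ =>
            (hIcont (fun x => Matrix.det (1 + r • A x) * (Lagrange.basis (auxNodes n) id r).eval t) ((hdetcont r).mul continuous_const)))]
          exact Finset.sum_congr rfl fun r _ => integral_mul_const _ _
      _ = Polynomial.eval t q := by
          rw [hq]
          rw [Polynomial.eval_finset_sum]
          exact Finset.sum_congr rfl fun r _ => by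
            rw [Polynomial.eval_mul, Polynomial.eval_C]
  have hq0 : HasDerivAt (fun tt : ℝ => Polynomial.eval tt q)
      (Polynomial.eval 0 (Polynomial.derivative q)) 0 := q.hasDerivAt 0
  rw [← hqder]
  exact hq0.congr_of_eventuallyEq (Filter.eventuallyEq_of_mem hball hmain)
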